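/- Let P be a CPOS polygon that is equal-area, i.e. [P_{i+1} − P_i, P_i − P_{i−1}] takes the same (nonzero) value for all i modulo 2n. Write its side vectors as e_i := P_{i+1} − P_i for 1 ≤ i ≤ n and e_{n+i} = −α_i e_i with α_i > 0 for 1 ≤ i ≤ n. Then α_1 = α_n and α_i α_{i+1} = 1 for 1 ≤ i ≤ n−1. Consequently: if α_i = 1 for some i, then α_j = 1 for all j and P is symmetric with respect to a point; if α_i ≠ 1 for some i, then n is odd and α_{i+1} = α_i^{−1} for 1 ≤ i ≤ n−1, so the α_i alternate between a value α ≠ 1 and α^{−1}. In particular, when n is even every equal-area CPOS polygon is symmetric. -/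

import Mathlib

open scoped BigOperators Classical

/-- `det2 v w` is the determinant of the 2×2 matrix with columns `v, w ∈ ℝ²`. -/
noncomputable def det2 (v w : ℝ × ℝ) : ℝ := v.1 * w.2 - v.2 * w.1

/-- A convex polygon with parallel opposite sides (CPOS polygon): vertices `P i`, `i : ℤ`,
periodic with period `2n`; the side vectors `e(i+1/2) = P(i+1) - P i` satisfy
`e(i+n+1/2) ∥ e(i+1/2)`, no two adjacent sides are parallel, and the polygon is
positively oriented: `[e(i+1/2), e(j+1/2)] > 0` for `1 ≤ i < j ≤ n`. -/
structure CPOS (n : ℕ) : Type where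
  P : ℤ → ℝ × ℝ
  hn : 2 ≤ n
  periodic : ∀ i : ℤ, P (i + 2 * (n : ℤ)) = P i
  parallel : ∀ i : ℤ, ∃ t : ℝ, P (i + (n : ℤ) + 1) - P (i + (n : ℤ)) = t • (P (i + 1) - P i)
  adj_not_parallel : ∀ i : ℤ, det2 (P (i + 1) - P i) (P (i + 2) - P (i + 1)) ≠ 0
  oriented : ∀ i j : ℤ, 1 ≤ i → i < j → j ≤ (n : ℤ) →
    0 < det2 (P (i + 1) - P i) (P (j + 1) - P j)

/-- `onDiag P n i x` : the point `x` lies on the great diagonal `d_i`,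
the line through `P i` and `P (i+n)`. -/
def onDiag (P : ℤ → ℝ × ℝ) (n : ℕ) (i : ℤ) (x : ℝ × ℝ) : Prop :=
  ∃ t : ℝ, x = P i + t • (P (i + (n : ℤ)) - P i)

lemma det2_neg_smul_left (a : ℝ) (v w : ℝ × ℝ) :
    det2 (-(a • v)) w = -(a * det2 v w) := by
  simp only [det2, Prod.fst_neg, Prod.snd_neg, Prod.smul_fst, Prod.smul_snd, smul_eq_mul]
  ring

lemma det2_neg_smul_right (a : ℝ) (v w : ℝ × ℝ) :
    det2 v (-(a • w)) = -(a * det2 v w) := by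
  simp only [det2, Prod.fst_neg, Prod.snd_neg, Prod.smul_fst, Prod.smul_snd, smul_eq_mul]
  ring

lemma det2_neg_smul_both (a b : ℝ) (v w : ℝ × ℝ) :
    det2 (-(a • v)) (-(b • w)) = a * b * det2 v w := by
  simp only [det2, Prod.fst_neg, Prod.snd_neg, Prod.smul_fst, Prod.smul_snd, smul_eq_mul]
  ring

/-- Let `P` be an equal-area CPOS polygon: `[e_{i+1}, e_i]` takes the same
nonzero value `c` for all `i`, where `e_i = P_{i+1} - P_i`. Write `e_{n+i} = -αᵢ eᵢ` with
`αᵢ > 0` for `1 ≤ i ≤ n`. Then `α₁ = αₙ` and `αᵢ αᵢ₊₁ = 1` for `1 ≤ i ≤ n-1`; if some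
`αᵢ = 1` then all `αⱼ = 1` and `P` is symmetric w.r.t. a point; if some `αᵢ ≠ 1` then `n`
is odd and `αᵢ₊₁ = αᵢ⁻¹` for `1 ≤ i ≤ n-1`; in particular for `n` even `P` is symmetric. -/
theorem statement6 {n : ℕ} (C : CPOS n) (c : ℝ) (hc : c ≠ 0)
    (hEA : ∀ i : ℤ, det2 (C.P (i + 1) - C.P i) (C.P i - C.P (i - 1)) = c)
    (α : ℤ → ℝ)
    (hα : ∀ i : ℤ, 1 ≤ i → i ≤ (n : ℤ) → 0 < α i ∧
      C.P (i + (n : ℤ) + 1) - C.P (i + (n : ℤ)) = -(α i • (C.P (i + 1) - C.P i))) :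
    α 1 = α (n : ℤ) ∧
    (∀ i : ℤ, 1 ≤ i → i ≤ (n : ℤ) - 1 → α i * α (i + 1) = 1) ∧
    ((∃ i : ℤ, 1 ≤ i ∧ i ≤ (n : ℤ) ∧ α i = 1) →
      (∀ j : ℤ, 1 ≤ j → j ≤ (n : ℤ) → α j = 1) ∧
        ∃ O : ℝ × ℝ, ∀ i : ℤ, C.P (i + (n : ℤ)) - O = O - C.P i) ∧
    ((∃ i : ℤ, 1 ≤ i ∧ i ≤ (n : ℤ) ∧ α i ≠ 1) →
      Odd n ∧ ∀ i : ℤ, 1 ≤ i → i ≤ (n : ℤ) - 1 → α (i + 1) = (α i)⁻¹) ∧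
    (Even n → ∃ O : ℝ × ℝ, ∀ i : ℤ, C.P (i + (n : ℤ)) - O = O - C.P i) := by
  have hn2 : (2:ℤ) ≤ (n:ℤ) := by exact_mod_cast C.hn
  set e : ℤ → ℝ × ℝ := fun i => C.P (i+1) - C.P i with he
  have hper : ∀ i : ℤ, e (i + 2*(n:ℤ)) = e i := by
    intro i
    simp only [he]
    rw [show i + 2*(n:ℤ) + 1 = (i+1) + 2*(n:ℤ) by ring, C.periodic, C.periodic]
  have hαpos : ∀ i : ℤ, 1 ≤ i → i ≤ (n:ℤ) → 0 < α i := fun i h1 h2 => (hα i h1 h2).1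
  have heα : ∀ i : ℤ, 1 ≤ i → i ≤ (n:ℤ) → e (i + (n:ℤ)) = -(α i • e i) := by
    intro i h1 h2
    simp only [he]
    exact (hα i h1 h2).2
  have hEA' : ∀ i : ℤ, det2 (e (i+1)) (e i) = c := by
    intro i
    simp only [he]
    have h := hEA (i+1)
    rw [show i + 1 - 1 = i by ring] at h
    exact h
  have hpos : 0 < det2 (e 1) (e (n:ℤ)) := by
    simp only [he]
    exact C.oriented 1 (n:ℤ) le_rfl (by omega) le_rfl
  have prodOne : ∀ i : ℤ, 1 ≤ i → i ≤ (n:ℤ) - 1 → α i * α (i+1) = 1 := by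
    intro i h1 h2
    have hi1 : e (i + (n:ℤ) + 1) = -(α (i+1) • e (i+1)) := by
      have h := heα (i+1) (by omega) (by omega)
      rwa [show i + 1 + (n:ℤ) = i + (n:ℤ) + 1 by ring] at h
    have hi0 : e (i + (n:ℤ)) = -(α i • e i) := heα i h1 (by omega)
    have h := hEA' (i + (n:ℤ))
    rw [hi1, hi0, det2_neg_smul_both, hEA' i] at h
    have h2' : α (i+1) * α i = 1 := mul_right_cancel₀ hc (h.trans (one_mul c).symm)
    rw [mul_comm]; exact h2'
  have hα1pos : 0 < α 1 := hαpos 1 le_rfl (by omega)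
  have hα1ne : α 1 ≠ 0 := ne_of_gt hα1pos
  have αend : α 1 = α (n:ℤ) := by
    have h1n : (1:ℤ) ≤ (n:ℤ) := by omega
    have hA1 : e ((n:ℤ) + 1) = -(α 1 • e 1) := by
      have h := heα 1 le_rfl h1n
      rwa [show (1:ℤ) + (n:ℤ) = (n:ℤ) + 1 by ring] at h
    have hA2 : e 0 = -(α (n:ℤ) • e (n:ℤ)) := by
      have h := heα (n:ℤ) h1n le_rfl
      rw [show (n:ℤ) + (n:ℤ) = 0 + 2*(n:ℤ) by ring, hper 0] at h
      exact h
    have hc1 : -(α 1 * det2 (e 1) (e (n:ℤ))) = c := by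
      have h := hEA' (n:ℤ)
      rw [hA1, det2_neg_smul_left] at h
      exact h
    have hc2 : -(α (n:ℤ) * det2 (e 1) (e (n:ℤ))) = c := by
      have h := hEA' 0
      rw [show (0:ℤ)+1 = 1 by ring, hA2, det2_neg_smul_right] at h
      exact h
    exact mul_right_cancel₀ (ne_of_gt hpos) (neg_injective (hc1.trans hc2.symm))
  have pat : ∀ k : ℕ, ((k:ℤ) + 1) ≤ (n:ℤ) → α ((k:ℤ)+1) = if Even k then α 1 else (α 1)⁻¹ := by
    intro k
    induction k with
    | zero => intro _; norm_num
    | succ k ih =>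
      intro hk
      have hk0 : ((k:ℤ)+1+1) ≤ (n:ℤ) := by push_cast at hk; omega
      have hk' : ((k:ℤ)+1) ≤ (n:ℤ) := by omega
      have hkn : ((k:ℤ)+1) ≤ (n:ℤ) - 1 := by omega
      have hprod := prodOne ((k:ℤ)+1) (by omega) hkn
      have hih := ih hk'
      have hgoal : α ((k:ℤ)+1+1) = if Even (k+1) then α 1 else (α 1)⁻¹ := by
        rcases Nat.even_or_odd k with hk2 | hk2
        · rw [if_neg (by simp [Nat.even_add_one, hk2])]
          rw [if_pos hk2] at hih
          rw [hih] at hprod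
          exact (inv_eq_of_mul_eq_one_right hprod).symm
        · rw [if_pos (by simp [Nat.even_add_one, Nat.not_even_iff_odd.mpr hk2])]
          rw [if_neg (Nat.not_even_iff_odd.mpr hk2)] at hih
          rw [hih] at hprod
          rw [(inv_eq_of_mul_eq_one_right hprod).symm, inv_inv]
      rw [show (((k+1:ℕ)):ℤ) = (k:ℤ)+1 by push_cast; ring]
      exact hgoal
  have patZ : ∀ j : ℤ, 1 ≤ j → j ≤ (n:ℤ) →
      α j = if Even ((j-1).toNat) then α 1 else (α 1)⁻¹ := by
    intro j h1 h2
    have hk : (((j-1).toNat : ℤ)) = j - 1 := Int.toNat_of_nonneg (by omega)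
    have h := pat (j-1).toNat (by rw [hk]; omega)
    rw [hk, show j - 1 + 1 = j by ring] at h
    exact h
  have allOne : α 1 = 1 → ∀ j : ℤ, 1 ≤ j → j ≤ (n:ℤ) → α j = 1 := by
    intro h1 j hj1 hj2
    rw [patZ j hj1 hj2, h1]
    split_ifs <;> simp
  have hodd : α 1 ≠ 1 → Odd n := by
    intro hne1
    rw [← Nat.not_even_iff_odd]
    intro hev
    have hnn : ((n:ℤ) - 1).toNat = n - 1 := by omega
    have hpn := patZ (n:ℤ) (by omega) le_rfl
    rw [hnn] at hpn
    have hnotev : ¬ Even (n - 1) := by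
      rw [Nat.even_sub (by omega : 1 ≤ n)]
      simp [hev]
    rw [if_neg hnotev] at hpn
    have h11 : α 1 = (α 1)⁻¹ := αend.trans hpn
    have h2 := mul_inv_cancel₀ hα1ne
    rw [← h11] at h2
    rcases mul_self_eq_one_iff.mp h2 with h | h
    · exact hne1 h
    · linarith
  have hsym : (∀ j : ℤ, 1 ≤ j → j ≤ (n:ℤ) → α j = 1) →
      ∃ O : ℝ × ℝ, ∀ i : ℤ, C.P (i + (n:ℤ)) - O = O - C.P i := by
    intro hall
    have hA : ∀ i : ℤ, 1 ≤ i → i ≤ (n:ℤ) → e (i + (n:ℤ)) = -(e i) := by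
      intro i h1 h2
      rw [heα i h1 h2, hall i h1 h2, one_smul]
    have hperk : ∀ k : ℤ, ∀ j : ℤ, e (j + 2*(n:ℤ)*k) = e j := by
      intro k
      induction k using Int.induction_on with
      | zero => intro j; norm_num
      | succ k ih =>
        intro j
        rw [show j + 2*(n:ℤ)*((k:ℤ)+1) = (j + 2*(n:ℤ)*(k:ℤ)) + 2*(n:ℤ) by ring, hper, ih]
      | pred k ih =>
        intro j
        rw [show j + 2*(n:ℤ)*(-(k:ℤ)-1) = (j - 2*(n:ℤ)) + 2*(n:ℤ)*(-(k:ℤ)) by ring, ih]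
        have h2 := hper (j - 2*(n:ℤ))
        rw [show j - 2*(n:ℤ) + 2*(n:ℤ) = j by ring] at h2
        exact h2.symm
    have hB' : ∀ r : ℤ, 1 ≤ r → r ≤ 2*(n:ℤ) → e (r + (n:ℤ)) = -(e r) := by
      intro r h1 h2
      by_cases hr : r ≤ (n:ℤ)
      · exact hA r h1 hr
      · have h3 := hA (r - (n:ℤ)) (by omega) (by omega)
        rw [show r - (n:ℤ) + (n:ℤ) = r by ring] at h3
        rw [show r + (n:ℤ) = (r - (n:ℤ)) + 2*(n:ℤ) by ring, hper, h3, neg_neg]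
    have hB : ∀ i : ℤ, e (i + (n:ℤ)) = -(e i) := by
      intro i
      set r : ℤ := (i - 1) % (2*(n:ℤ)) + 1 with hrdef
      set k : ℤ := (i - 1) / (2*(n:ℤ)) with hkdef
      have hdm := Int.mul_ediv_add_emod (i-1) (2*(n:ℤ))
      rw [← hkdef] at hdm
      have hi : i = r + 2*(n:ℤ)*k := by rw [hrdef]; linarith
      have hnn0 : (i - 1) % (2*(n:ℤ)) ≥ 0 := Int.emod_nonneg (i-1) (by omega)
      have hlt : (i - 1) % (2*(n:ℤ)) < 2*(n:ℤ) := Int.emod_lt_of_pos (i-1) (by omega)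
      have hr1 : 1 ≤ r := by rw [hrdef]; linarith
      have hr2 : r ≤ 2*(n:ℤ) := by rw [hrdef]; linarith
      rw [hi, show r + 2*(n:ℤ)*k + (n:ℤ) = (r + (n:ℤ)) + 2*(n:ℤ)*k by ring, hperk, hperk,
        hB' r hr1 hr2]
    have hstep : ∀ i : ℤ, C.P (i + 1 + (n:ℤ)) + C.P (i+1) = C.P (i + (n:ℤ)) + C.P i := by
      intro i
      have h := hB i
      simp only [he] at h
      rw [show i + 1 + (n:ℤ) = i + (n:ℤ) + 1 by ring]
      linear_combination h
    have hconst : ∀ i : ℤ, C.P (i + (n:ℤ)) + C.P i = C.P ((0:ℤ) + (n:ℤ)) + C.P 0 := by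
      intro i
      induction i using Int.induction_on with
      | zero => rfl
      | succ k ih => exact (hstep (k:ℤ)).trans ih
      | pred k ih =>
        have h := hstep (-(k:ℤ) - 1)
        rw [show -(k:ℤ) - 1 + 1 = -(k:ℤ) by ring] at h
        rw [← h]
        exact ih
    refine ⟨((1:ℝ)/2) • (C.P ((0:ℤ) + (n:ℤ)) + C.P 0), fun i => ?_⟩
    have hOO : ((1:ℝ)/2) • (C.P ((0:ℤ)+(n:ℤ)) + C.P 0) + ((1:ℝ)/2) • (C.P ((0:ℤ)+(n:ℤ)) + C.P 0)
        = C.P ((0:ℤ)+(n:ℤ)) + C.P 0 := by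
      rw [← add_smul]; norm_num
    have hi := (hconst i).trans hOO.symm
    rw [sub_eq_sub_iff_add_eq_add]
    exact hi
  refine ⟨αend, prodOne, ?_, ?_, ?_⟩
  · rintro ⟨i, hi1, hi2, hi⟩
    have h1 : α 1 = 1 := by
      have h := patZ i hi1 hi2
      rw [hi] at h
      split_ifs at h with hh
      · exact h.symm
      · exact inv_eq_one.mp h.symm
    exact ⟨allOne h1, hsym (allOne h1)⟩
  · rintro ⟨i, hi1, hi2, hi⟩
    refine ⟨hodd (fun h1 => hi (allOne h1 i hi1 hi2)), fun j hj1 hj2 => ?_⟩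
    exact (inv_eq_of_mul_eq_one_right (prodOne j hj1 hj2)).symm
  · intro hev
    have h1 : α 1 = 1 := by
      by_contra h
      exact (Nat.not_odd_iff_even.mpr hev) (hodd h)
    exact hsym (allOne h1)
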